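/- Let k > 0, h > 0 with 0 < kh/2 < 1, and define k^h := (2/h)·arcsin(kh/2). Then (1/24)·k³h² < k^h − k < ((π−2)/8)·k³h². -/

import Mathlib

open Real

private lemma sqrt_facts {y : ℝ} (hy0 : 0 < y) (hy1 : y < 1) :
    0 < Real.sqrt (1 - y^2) ∧ Real.sqrt (1 - y^2) < 1 ∧
      Real.sqrt (1 - y^2) ^ 2 = 1 - y^2 := by
  have hs : 0 < 1 - y^2 := by nlinarith
  refine ⟨Real.sqrt_pos.mpr hs, ?_, Real.sq_sqrt hs.le⟩
  calc Real.sqrt (1 - y^2) < Real.sqrt 1 := Real.sqrt_lt_sqrt hs.le (by nlinarith)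
    _ = 1 := Real.sqrt_one

lemma arcsin_lower {x : ℝ} (hx0 : 0 < x) (hx1 : x < 1) :
    x + x^3/6 < Real.arcsin x := by
  have key : StrictMonoOn (fun y => Real.arcsin y - (y + y^3/6)) (Set.Icc 0 x) := by
    apply strictMonoOn_of_deriv_pos (convex_Icc 0 x)
    · exact (Real.continuous_arcsin.sub (by continuity)).continuousOn
    · intro y hy
      rw [interior_Icc] at hy
      have hy0 := hy.1
      have hy1 : y < 1 := hy.2.trans hx1
      obtain ⟨ht0, ht1, ht2⟩ := sqrt_facts hy0 hy1
      set t := Real.sqrt (1 - y^2) with htdef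
      have hd : HasDerivAt (fun y => Real.arcsin y - (y + y^3/6))
          (1 / t - (1 + (3:ℕ) * y^(3-1) / 6)) y :=
        (Real.hasDerivAt_arcsin (by linarith) (by linarith)).sub
          ((hasDerivAt_id y).add ((hasDerivAt_pow 3 y).div_const 6))
      rw [hd.deriv]
      have h1 : (1 + y^2/2) * t < 1 := by nlinarith [sq_nonneg ((1 + y^2/2)*t)]
      have h2 : 1 + y^2/2 < 1 / t := by rw [lt_div_iff₀ ht0]; exact h1
      push_cast
      nlinarith
  have h0 : (0:ℝ) ∈ Set.Icc 0 x := ⟨le_refl _, hx0.le⟩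
  have hx : x ∈ Set.Icc 0 x := ⟨hx0.le, le_refl _⟩
  have := key h0 hx hx0
  simp [Real.arcsin_zero] at this
  linarith

lemma phi_pos {x : ℝ} (hx0 : 0 < x) (hx1 : x < 1) :
    0 < x / Real.sqrt (1 - x^2) + 2*x - 3 * Real.arcsin x := by
  have key : StrictMonoOn (fun y => y / Real.sqrt (1 - y^2) + 2*y - 3 * Real.arcsin y)
      (Set.Icc 0 x) := by
    apply strictMonoOn_of_deriv_pos (convex_Icc 0 x)
    · apply ContinuousOn.sub
      · apply ContinuousOn.add
        · apply ContinuousOn.div continuousOn_id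
            ((by continuity : Continuous fun y : ℝ => Real.sqrt (1 - y^2)).continuousOn)
          intro y hy
          have hy1 : y < 1 := lt_of_le_of_lt hy.2 hx1
          have hy0 : 0 ≤ y := hy.1
          have h : 0 < 1 - y^2 := by nlinarith
          exact (Real.sqrt_pos.mpr h).ne'
        · exact (continuous_const.mul continuous_id).continuousOn
      · exact (continuous_const.mul Real.continuous_arcsin).continuousOn
    · intro y hy
      rw [interior_Icc] at hy
      have hy0 := hy.1
      have hy1 : y < 1 := hy.2.trans hx1
      obtain ⟨ht0, ht1, ht2⟩ := sqrt_facts hy0 hy1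
      set t := Real.sqrt (1 - y^2) with htdef
      have hne : (1:ℝ) - y^2 ≠ 0 := by nlinarith
      have hin : HasDerivAt (fun y : ℝ => 1 - y^2) (-((2:ℕ) * y^(2-1))) y :=
        (hasDerivAt_pow 2 y).const_sub 1
      have hsq : HasDerivAt (fun y : ℝ => Real.sqrt (1 - y^2))
          ((-((2:ℕ) * y^(2-1))) / (2 * t)) y := hin.sqrt hne
      have hdiv : HasDerivAt (fun y : ℝ => y / Real.sqrt (1 - y^2))
          ((1 * t - y * ((-((2:ℕ) * y^(2-1))) / (2 * t))) / t^2) y :=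
        (hasDerivAt_id y).div hsq ht0.ne'
      have hd : HasDerivAt (fun y => y / Real.sqrt (1 - y^2) + 2*y - 3 * Real.arcsin y)
          ((1 * t - y * ((-((2:ℕ) * y^(2-1))) / (2 * t))) / t^2 + 2*1
            - 3 * (1 / t)) y :=
        (hdiv.add ((hasDerivAt_id y).const_mul 2)).sub
          ((Real.hasDerivAt_arcsin (by linarith) (by linarith)).const_mul 3)
      rw [hd.deriv]
      have hD : (1 * t - y * ((-((2:ℕ) * y^(2-1))) / (2 * t))) / t^2 = 1 / t^3 := by
        rw [div_eq_div_iff (by positivity) (by positivity)]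
        push_cast
        field_simp
        linear_combination ht2
      rw [hD]
      have hcube : 0 < (1 - t)^2 * (1 + 2*t) :=
        mul_pos (pow_pos (by linarith) 2) (by linarith)
      have h3 : 1 / t^3 + 2*1 - 3 * (1/t) = (1 - 3*t^2 + 2*t^3) / t^3 := by
        field_simp; ring
      rw [h3]
      exact div_pos (by nlinarith) (by positivity)
  have h0 : (0:ℝ) ∈ Set.Icc 0 x := ⟨le_refl _, hx0.le⟩
  have hx : x ∈ Set.Icc 0 x := ⟨hx0.le, le_refl _⟩
  have := key h0 hx hx0
  simp [Real.arcsin_zero] at this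
  linarith

lemma arcsin_upper {x : ℝ} (hx0 : 0 < x) (hx1 : x < 1) :
    Real.arcsin x - x < (π - 2)/2 * x^3 := by
  have key : StrictMonoOn (fun y => (Real.arcsin y - y) / y^3) (Set.Icc x 1) := by
    apply strictMonoOn_of_deriv_pos (convex_Icc x 1)
    · apply ContinuousOn.div
      · exact (Real.continuous_arcsin.sub continuous_id).continuousOn
      · exact (continuous_pow 3).continuousOn
      · intro y hy
        have : 0 < y := lt_of_lt_of_le hx0 hy.1
        positivity
    · intro y hy
      rw [interior_Icc] at hy
      have hy0 : 0 < y := hx0.trans hy.1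
      have hy1 : y < 1 := hy.2
      obtain ⟨ht0, ht1, ht2⟩ := sqrt_facts hy0 hy1
      set t := Real.sqrt (1 - y^2) with htdef
      have hnum : HasDerivAt (fun y => Real.arcsin y - y) (1 / t - 1) y :=
        (Real.hasDerivAt_arcsin (by linarith) (by linarith)).sub (hasDerivAt_id y)
      have hd : HasDerivAt (fun y => (Real.arcsin y - y) / y^3)
          (((1 / t - 1) * y^3 - (Real.arcsin y - y) * ((3:ℕ) * y^(3-1))) / (y^3)^2) y :=
        hnum.div (hasDerivAt_pow 3 y) (by positivity)
      rw [hd.deriv]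
      apply div_pos _ (by positivity)
      have hphi := phi_pos hy0 hy1
      rw [← htdef] at hphi
      push_cast
      have hyd : y / t = y * (1/t) := by ring
      -- need: (1/t - 1) * y^3 - (arcsin y - y) * (3 * y^2) > 0
      -- = y^2 * (y/t - y - 3 arcsin y + 3 y) = y^2 * phi
      have : (1 / t - 1) * y^3 - (Real.arcsin y - y) * (3 * y^(3-1))
          = y^2 * (y / t + 2*y - 3 * Real.arcsin y) := by
        field_simp
        ring
      rw [this]
      positivity
  have hmem1 : x ∈ Set.Icc x 1 := ⟨le_refl _, hx1.le⟩
  have hmem2 : (1:ℝ) ∈ Set.Icc x 1 := ⟨hx1.le, le_refl _⟩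
  have h2 : (Real.arcsin x - x) / x^3 < (Real.arcsin 1 - 1) / 1^3 := key hmem1 hmem2 hx1
  rw [Real.arcsin_one] at h2
  norm_num at h2
  rw [div_lt_iff₀ (by positivity)] at h2
  nlinarith [h2]

theorem discrete_wavenumber_bounds (k h : ℝ) (hk : 0 < k) (hh : 0 < h)
    (hkh : k * h / 2 < 1) :
    (1 / 24) * k ^ 3 * h ^ 2 < (2 / h) * Real.arcsin (k * h / 2) - k ∧
    (2 / h) * Real.arcsin (k * h / 2) - k < ((π - 2) / 8) * k ^ 3 * h ^ 2 := by
  set x := k * h / 2 with hxdef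
  have hx0 : 0 < x := by positivity
  have hlow := arcsin_lower hx0 hkh
  have hup := arcsin_upper hx0 hkh
  have h2h : 0 < 2 / h := by positivity
  constructor
  · have := mul_lt_mul_of_pos_left hlow h2h
    have heq : 2 / h * (x + x^3/6) = k + (1/24) * k^3 * h^2 := by
      rw [hxdef]; field_simp; ring
    rw [heq] at this
    linarith
  · have := mul_lt_mul_of_pos_left hup h2h
    have heq : 2 / h * ((π - 2)/2 * x^3) = ((π - 2)/8) * k^3 * h^2 := by
      rw [hxdef]; field_simp; ring
    have heq2 : 2 / h * (Real.arcsin x - x) = 2 / h * Real.arcsin x - k := by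
      rw [hxdef]; field_simp
    rw [heq, heq2] at this
    linarith
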